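/- Let T be an SYT of skew shape λ/μ, β(T) its Yamanouchi permutation, and i a peak or valley of T. Then β(κ_i(T)) = κ_i(β(T)), where the left κ_i is the Knuth transformation on SYTs and the right κ_i is the Knuth transformation on permutations. -/

import Mathlib

/-- `lam/mu` is a skew shape: `lam` and `mu` are partitions (1-indexed, weakly decreasing,
with finitely many nonzero parts) with `mu ⊆ lam`. -/
def IsSkewShape (lam mu : ℕ → ℕ) : Prop :=
  (∀ i, 1 ≤ i → lam (i+1) ≤ lam i) ∧ (∀ i, 1 ≤ i → mu (i+1) ≤ mu i) ∧
  (∀ i, mu i ≤ lam i) ∧ (∃ N, ∀ i, N ≤ i → lam i = 0)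

/-- A standard Young tableau of skew shape `lam/mu` with `n` entries, recorded by the
(1-indexed) row and column of each entry `1, …, n`.  Rows are numbered from top to
bottom, columns from left to right; the cells of `lam/mu` in row `r` are the columns `c`
with `mu r < c ≤ lam r`.  Entries increase along rows and columns.  The functions `row`
and `col` are normalized to `0` outside `{1, …, n}`. -/
structure SkewSYT (lam mu : ℕ → ℕ) (n : ℕ) where
  row : ℕ → ℕ
  col : ℕ → ℕ
  row_pos : ∀ k, 1 ≤ k → k ≤ n → 1 ≤ row k
  mem_cell : ∀ k, 1 ≤ k → k ≤ n → mu (row k) < col k ∧ col k ≤ lam (row k)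
  inj' : ∀ k l, 1 ≤ k → k ≤ n → 1 ≤ l → l ≤ n → row k = row l → col k = col l → k = l
  surj' : ∀ r c, 1 ≤ r → mu r < c → c ≤ lam r → ∃ k, 1 ≤ k ∧ k ≤ n ∧ row k = r ∧ col k = c
  row_inc : ∀ k l, 1 ≤ k → k < l → l ≤ n → row k = row l → col k < col l
  col_inc : ∀ k l, 1 ≤ k → k < l → l ≤ n → col k = col l → row k < row l
  row_out : ∀ k, ¬(1 ≤ k ∧ k ≤ n) → row k = 0
  col_out : ∀ k, ¬(1 ≤ k ∧ k ≤ n) → col k = 0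

/-- The peak set of a standard Young tableau: `i` (with `2 ≤ i ≤ n-1`) is a peak when
`i-1` is an ascent (`i` is not in a lower row than `i-1`) and `i` is a descent
(`i+1` is in a strictly lower row than `i`). -/
def SkewSYT.peakSet {lam mu : ℕ → ℕ} {n : ℕ} (T : SkewSYT lam mu n) : Set ℕ :=
  {i | 2 ≤ i ∧ i + 1 ≤ n ∧ T.row i ≤ T.row (i-1) ∧ T.row i < T.row (i+1)}

/-- The valley set of a standard Young tableau: `i-1` is a descent and `i` is an ascent. -/
def SkewSYT.valleySet {lam mu : ℕ → ℕ} {n : ℕ} (T : SkewSYT lam mu n) : Set ℕ :=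
  {i | 2 ≤ i ∧ i + 1 ≤ n ∧ T.row (i-1) < T.row i ∧ T.row (i+1) ≤ T.row i}

/-- Swap the values of `f` at positions `a` and `b`. -/
def swapFun (f : ℕ → ℕ) (a b : ℕ) : ℕ → ℕ :=
  fun k => if k = a then f b else if k = b then f a else f k

/-- The condition (in terms of the row word of the tableau) under which the Knuth
transformation `κ_i` on SYTs swaps the entries `i-1` and `i` (cases (i) and (iii)):
either `i` is a valley and `i+1` lies in a lower row than `i-1`, or `i` is a peak and
`i+1` does not lie in a lower row than `i-1`.  In the remaining cases (ii) and (iv)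
(`i` a valley with `i+1` not lower than `i-1`, or `i` a peak with `i+1` lower than `i-1`)
the entries `i` and `i+1` are swapped. -/
def swapLowCond (row : ℕ → ℕ) (i : ℕ) : Prop :=
  (row (i-1) < row i ∧ row (i+1) ≤ row i ∧ row (i-1) < row (i+1)) ∨
  (row i ≤ row (i-1) ∧ row i < row (i+1) ∧ row (i+1) ≤ row (i-1))

open scoped Classical in
/-- The effect of the Knuth transformation `κ_i` on a position function `f` (either the
row function or the column function of the tableau), the case distinction being made
through the row function `row`. -/
noncomputable def kSwap (row : ℕ → ℕ) (i : ℕ) (f : ℕ → ℕ) : ℕ → ℕ :=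
  if swapLowCond row i then swapFun f (i-1) i else swapFun f i (i+1)

/-- The row function of `κ_i T`. -/
noncomputable def kRow {lam mu : ℕ → ℕ} {n : ℕ} (T : SkewSYT lam mu n) (i : ℕ) : ℕ → ℕ :=
  kSwap T.row i T.row

/-- The column function of `κ_i T`. -/
noncomputable def kCol {lam mu : ℕ → ℕ} {n : ℕ} (T : SkewSYT lam mu n) (i : ℕ) : ℕ → ℕ :=
  kSwap T.row i T.col

/-- The Knuth transformation `κ_i` on words/permutations (moves `acb ↦ cab`, `bca ↦ bac`,
`cab ↦ acb`, `bac ↦ bca` for `a < b < c` at positions `i-1, i, i+1`). -/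
def kappaP (w : ℕ → ℕ) (i : ℕ) : ℕ → ℕ :=
  if (w (i-1) < w i ∧ w (i+1) < w i ∧ w (i-1) < w (i+1)) ∨
      (w i < w (i-1) ∧ w i < w (i+1) ∧ w (i+1) < w (i-1)) then
    fun j => if j = i - 1 then w i else if j = i then w (i-1) else w j
  else
    fun j => if j = i then w (i+1) else if j = i + 1 then w i else w j

/-- The peak set of a permutation/word: `w (i-1) < w i > w (i+1)` with `2 ≤ i ≤ n-1`. -/
def peakSetP (n : ℕ) (w : ℕ → ℕ) : Set ℕ :=
  {i | 2 ≤ i ∧ i + 1 ≤ n ∧ w (i-1) < w i ∧ w (i+1) < w i}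

/-- The valley set of a permutation/word: `w (i-1) > w i < w (i+1)` with `2 ≤ i ≤ n-1`. -/
def valleySetP (n : ℕ) (w : ℕ → ℕ) : Set ℕ :=
  {i | 2 ≤ i ∧ i + 1 ≤ n ∧ w i < w (i-1) ∧ w i < w (i+1)}

/-- The Yamanouchi permutation associated to the Yamanouchi word `y` of an SYT of skew
shape `lam/mu` (with `a_i = lam i - mu i`): the `a_i` occurrences of the letter `i` are
replaced, from left to right in decreasing order, by the numbers
`a_1 + ⋯ + a_{i-1} + 1, …, a_1 + ⋯ + a_{i-1} + a_i`; thus position `j` receives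
`a_1 + ⋯ + a_{y j - 1}` plus the number of occurrences of `y j` at positions `≥ j`. -/
def yamPerm (lam mu : ℕ → ℕ) (n : ℕ) (y : ℕ → ℕ) : ℕ → ℕ :=
  fun j => (∑ t ∈ Finset.Ico 1 (y j), (lam t - mu t)) +
    ((Finset.Icc j n).filter (fun t => y t = y j)).card

section Aux

variable {lam mu : ℕ → ℕ} {n : ℕ}

/-- The number of entries of `T` in the row of entry `j`, at positions `≥ j`, is at most
the length of that row. -/
lemma count_le (T : SkewSYT lam mu n) {j : ℕ} (hj1 : 1 ≤ j) :
    ((Finset.Icc j n).filter (fun t => T.row t = T.row j)).card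
      ≤ lam (T.row j) - mu (T.row j) := by
  rw [← Nat.card_Ioc (mu (T.row j)) (lam (T.row j))]
  apply Finset.card_le_card_of_injOn T.col
  · intro t ht
    simp only [Finset.mem_coe, Finset.mem_filter, Finset.mem_Icc] at ht
    have := T.mem_cell t (hj1.trans ht.1.1) ht.1.2
    rw [ht.2] at this
    simpa [Finset.mem_Ioc] using this
  · intro a ha b hb hab
    simp only [Finset.coe_filter, Set.mem_setOf_eq, Finset.mem_Icc, Finset.mem_coe,
      Finset.mem_filter] at ha hb
    exact T.inj' a b (hj1.trans ha.1.1) ha.1.2 (hj1.trans hb.1.1) hb.1.2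
      (ha.2.trans hb.2.symm) hab

lemma yam_lt (T : SkewSYT lam mu n) {j k : ℕ} (hj1 : 1 ≤ j) (hjn : j ≤ n)
    (hk1 : 1 ≤ k) (hkn : k ≤ n) (hr : T.row j < T.row k) :
    yamPerm lam mu n T.row j < yamPerm lam mu n T.row k := by
  unfold yamPerm
  have hc := count_le T hj1
  have hk' : 1 ≤ ((Finset.Icc k n).filter (fun t => T.row t = T.row k)).card := by
    apply Finset.card_pos.mpr
    exact ⟨k, by simp [Finset.mem_Icc, hkn]⟩
  have hrowj : 1 ≤ T.row j := T.row_pos j hj1 hjn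
  have hsum : (∑ t ∈ Finset.Ico 1 (T.row j), (lam t - mu t))
      + (lam (T.row j) - mu (T.row j))
      ≤ ∑ t ∈ Finset.Ico 1 (T.row k), (lam t - mu t) := by
    rw [← Finset.sum_Ico_succ_top hrowj]
    exact Finset.sum_le_sum_of_subset (Finset.Ico_subset_Ico le_rfl hr)
  omega

lemma yam_gt (T : SkewSYT lam mu n) {j k : ℕ} (hj1 : 1 ≤ j) (hjk : j < k) (hkn : k ≤ n)
    (hr : T.row j = T.row k) :
    yamPerm lam mu n T.row k < yamPerm lam mu n T.row j := by
  unfold yamPerm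
  rw [← hr]
  have hcard : ((Finset.Icc k n).filter (fun t => T.row t = T.row j)).card
      < ((Finset.Icc j n).filter (fun t => T.row t = T.row j)).card := by
    apply Finset.card_lt_card
    rw [Finset.ssubset_iff_of_subset
      (Finset.filter_subset_filter _ (Finset.Icc_subset_Icc (le_of_lt hjk) le_rfl))]
    refine ⟨j, ?_, ?_⟩
    · simp only [Finset.mem_filter, Finset.mem_Icc]
      exact ⟨⟨le_rfl, hjk.le.trans hkn⟩, trivial⟩
    · simp only [Finset.mem_filter, Finset.mem_Icc]
      intro hmem
      omega
  omega

lemma yam_iff (T : SkewSYT lam mu n) {j k : ℕ} (hj1 : 1 ≤ j) (hjk : j < k) (hkn : k ≤ n) :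
    (yamPerm lam mu n T.row j < yamPerm lam mu n T.row k ↔ T.row j < T.row k) ∧
    (yamPerm lam mu n T.row k < yamPerm lam mu n T.row j ↔ T.row k ≤ T.row j) := by
  have hjn : j ≤ n := hjk.le.trans hkn
  have hk1 : 1 ≤ k := hj1.trans hjk.le
  rcases lt_trichotomy (T.row j) (T.row k) with hh | hh | hh
  · have := yam_lt T hj1 hjn hk1 hkn hh
    constructor <;> omega
  · have := yam_gt T hj1 hjk hkn hh
    constructor <;> omega
  · have := yam_lt T hk1 hkn hj1 hjn hh
    constructor <;> omega

/-- Effect of swapping two adjacent, distinct letters on the Yamanouchi permutation. -/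
lemma yamPerm_swap (lam mu : ℕ → ℕ) (n : ℕ) (y : ℕ → ℕ) (p : ℕ)
    (hp : 1 ≤ p) (hpn : p + 1 ≤ n) (hne : y p ≠ y (p+1)) :
    yamPerm lam mu n (swapFun y p (p+1)) = fun j =>
      if j = p then yamPerm lam mu n y (p+1)
      else if j = p+1 then yamPerm lam mu n y p
      else yamPerm lam mu n y j := by
  have hy'p : swapFun y p (p+1) p = y (p+1) := by simp [swapFun]
  have hy'p1 : swapFun y p (p+1) (p+1) = y p := by
    unfold swapFun
    rw [if_neg (by omega), if_pos rfl]
  have hy'out : ∀ t, t ≠ p → t ≠ p + 1 → swapFun y p (p+1) t = y t := by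
    intro t h1 h2
    simp [swapFun, h1, h2]
  have e1 : Finset.Icc p n = insert p (Finset.Icc (p+1) n) := by
    ext t; simp only [Finset.mem_Icc, Finset.mem_insert]; omega
  have e2 : Finset.Icc (p+1) n = insert (p+1) (Finset.Icc (p+2) n) := by
    ext t; simp only [Finset.mem_Icc, Finset.mem_insert]; omega
  have e3 : ∀ c, (Finset.Icc (p+2) n).filter (fun t => swapFun y p (p+1) t = c)
      = (Finset.Icc (p+2) n).filter (fun t => y t = c) := by
    intro c
    apply Finset.filter_congr
    intro t ht
    simp only [Finset.mem_Icc] at ht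
    rw [hy'out t (by omega) (by omega)]
  have hpmem : p ∉ Finset.Icc (p+2) n := by simp [Finset.mem_Icc]
  have hp1mem : p + 1 ∉ Finset.Icc (p+2) n := by simp [Finset.mem_Icc]
  funext j
  by_cases hjp : j = p
  · subst hjp
    rw [if_pos rfl]
    unfold yamPerm
    rw [hy'p]
    congr 1
    rw [e1, e2, Finset.filter_insert, Finset.filter_insert, Finset.filter_insert,
      if_pos hy'p, if_neg (by rw [hy'p1]; exact hne), if_pos rfl, e3]
    rw [Finset.card_insert_of_notMem (by simp only [Finset.mem_filter]; tauto),
      Finset.card_insert_of_notMem (by simp only [Finset.mem_filter]; tauto)]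
  · by_cases hjp1 : j = p + 1
    · subst hjp1
      rw [if_neg (by omega), if_pos rfl]
      unfold yamPerm
      rw [hy'p1]
      congr 1
      rw [e2, e1, e2, Finset.filter_insert, Finset.filter_insert, Finset.filter_insert,
        if_pos hy'p1, if_pos rfl, if_neg (fun hh => hne hh.symm), e3]
      rw [Finset.card_insert_of_notMem (by simp only [Finset.mem_filter]; tauto),
        Finset.card_insert_of_notMem (by simp only [Finset.mem_filter]; tauto)]
    · rw [if_neg hjp, if_neg hjp1]
      unfold yamPerm
      rw [hy'out j hjp hjp1]
      congr 1
      rcases lt_or_gt_of_ne hjp with hlt | hgt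
      · -- j < p : the swap permutes Icc j n
        rw [Finset.card_filter, Finset.card_filter]
        refine Finset.sum_equiv (Equiv.swap p (p+1)) ?_ ?_
        · intro t
          simp only [Finset.mem_Icc, Equiv.swap_apply_def]
          split_ifs <;> omega
        · intro t ht
          have hcomp : swapFun y p (p+1) t = y (Equiv.swap p (p+1) t) := by
            simp only [swapFun, Equiv.swap_apply_def]
            split_ifs <;> simp_all
          rw [hcomp]
      · -- j > p+1 : the two filters coincide
        have : j ≥ p + 2 := by omega
        congr 1
        apply Finset.filter_congr
        intro t ht
        simp only [Finset.mem_Icc] at ht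
        rw [hy'out t (by omega) (by omega)]

end Aux

/-- For `T` an SYT of skew shape `lam/mu`, `β` its Yamanouchi permutation map and `i` a
peak or valley of `T`: `β(κ_i T) = κ_i(β T)`, where the left Knuth transformation is the
one on SYTs and the right one is the one on permutations. -/
theorem stmt6 (lam mu : ℕ → ℕ) (n : ℕ) (h : IsSkewShape lam mu)
    (T S : SkewSYT lam mu n) (i : ℕ) (hi : i ∈ T.peakSet ∪ T.valleySet)
    (hS : S.row = kRow T i ∧ S.col = kCol T i) :
    yamPerm lam mu n S.row = kappaP (yamPerm lam mu n T.row) i := by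
  obtain ⟨hSrow, -⟩ := hS
  have hbounds : 2 ≤ i ∧ i + 1 ≤ n := by
    rcases hi with hh | hh <;> exact ⟨hh.1, hh.2.1⟩
  obtain ⟨h2, hn⟩ := hbounds
  set w := yamPerm lam mu n T.row with hw
  have key1 := yam_iff T (j := i - 1) (k := i) (by omega) (by omega) (by omega)
  have key2 := yam_iff T (j := i) (k := i + 1) (by omega) (by omega) (by omega)
  have key3 := yam_iff T (j := i - 1) (k := i + 1) (by omega) (by omega) (by omega)
  have hcond : swapLowCond T.row i ↔
      ((w (i-1) < w i ∧ w (i+1) < w i ∧ w (i-1) < w (i+1)) ∨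
        (w i < w (i-1) ∧ w i < w (i+1) ∧ w (i+1) < w (i-1))) := by
    simp only [swapLowCond, hw, ← key1.1, ← key1.2, ← key2.1, ← key2.2, ← key3.1, ← key3.2]
  by_cases hsw : swapLowCond T.row i
  · -- the entries i-1 and i are swapped
    have hrne : T.row (i-1) ≠ T.row i := by
      rcases hsw with ⟨a, b, c⟩ | ⟨a, b, c⟩ <;> omega
    have hSrow' : S.row = swapFun T.row (i-1) ((i-1)+1) := by
      rw [show i - 1 + 1 = i from by omega, hSrow]
      unfold kRow kSwap
      rw [if_pos hsw]
    have hne' : T.row (i-1) ≠ T.row ((i-1)+1) := by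
      rw [show i - 1 + 1 = i from by omega]; exact hrne
    rw [hSrow', yamPerm_swap lam mu n T.row (i-1) (by omega) (by omega) hne']
    unfold kappaP
    rw [if_pos (hcond.mp hsw)]
    simp only [show i - 1 + 1 = i from by omega, hw]
  · -- the entries i and i+1 are swapped
    have hrne : T.row i ≠ T.row (i+1) := by
      rcases hi with hh | hh
      · exact ne_of_lt hh.2.2.2
      · obtain ⟨-, -, hv1, hv2⟩ := hh
        have h3 : T.row (i+1) ≤ T.row (i-1) := by
          by_contra hcon
          push_neg at hcon
          exact hsw (Or.inl ⟨hv1, hv2, hcon⟩)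
        omega
    have hSrow' : S.row = swapFun T.row i (i+1) := by
      rw [hSrow]
      unfold kRow kSwap
      rw [if_neg hsw]
    rw [hSrow', yamPerm_swap lam mu n T.row i (by omega) hn hrne]
    unfold kappaP
    rw [if_neg (fun hc => hsw (hcond.mpr hc))]
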